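/- Let V be a finite-dimensional complex vector space and let E be an abelian subgroup of GL(V). Suppose K is a subgroup of E of finite index in E such that every element of K is a diagonalizable linear operator. Then every element of E is diagonalizable, and consequently E is simultaneously diagonalizable: there exists a basis of V with respect to which every element of E is represented by a diagonal matrix. -/

import Mathlib

/-- A linear operator on a complex vector space is diagonalizable if the space admits a
(finite) basis of eigenvectors of the operator. -/
def IsDiagonalizable {V : Type*} [AddCommGroup V] [Module ℂ V] (f : V →ₗ[ℂ] V) : Prop :=
  ∃ (n : ℕ) (b : Module.Basis (Fin n) ℂ V), ∀ i, ∃ c : ℂ, f (b i) = c • b i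

open Polynomial Module Function

/-- A diagonalizable endomorphism is semisimple. -/
lemma isSemisimple_of_isDiagonalizable {V : Type*} [AddCommGroup V] [Module ℂ V]
    (f : V →ₗ[ℂ] V) (h : IsDiagonalizable f) :
    Module.End.IsSemisimple f := by
  classical
  obtain ⟨n, b, hb⟩ := h
  choose c hc using hb
  set s : Finset ℂ := Finset.image c Finset.univ with hs
  set p : ℂ[X] := ∏ μ ∈ s, (X - C μ) with hp
  have hsep : p.Separable := separable_prod_X_sub_C_iff'.mpr (fun i _ j _ h => h)
  have haeval : aeval f p = 0 := by
    refine b.ext fun i => ?_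
    have hci : c i ∈ s := Finset.mem_image_of_mem c (Finset.mem_univ i)
    have hfac : p = (∏ μ ∈ s.erase (c i), (X - C μ)) * (X - C (c i)) :=
      (Finset.prod_erase_mul s _ hci).symm
    rw [hfac, map_mul, LinearMap.zero_apply, Module.End.mul_apply]
    have : (aeval f (X - C (c i))) (b i) = 0 := by
      rw [map_sub, aeval_X, aeval_C, LinearMap.sub_apply, Module.algebraMap_end_apply,
        hc i, sub_self]
    rw [this, map_zero]
  exact Module.End.isSemisimple_of_squarefree_aeval_eq_zero hsep.squarefree haeval

/-- If a power (with nonzero exponent) of an invertible endomorphism is semisimple, then so is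
the endomorphism itself. -/
lemma isSemisimple_of_pow_isSemisimple {V : Type*} [AddCommGroup V] [Module ℂ V]
    [FiniteDimensional ℂ V]
    (g : (V →ₗ[ℂ] V)ˣ) (m : ℕ) (hm : m ≠ 0)
    (h : Module.End.IsSemisimple ((g : V →ₗ[ℂ] V) ^ m)) :
    Module.End.IsSemisimple (g : V →ₗ[ℂ] V) := by
  set f : Module.End ℂ V := (g : V →ₗ[ℂ] V) ^ m with hf
  set p : ℂ[X] := minpoly ℂ f with hpdef
  have hpne : p ≠ 0 := minpoly.ne_zero (Algebra.IsIntegral.isIntegral f)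
  have hsq : Squarefree p := h.minpoly_squarefree
  have hp0 : p.eval 0 ≠ 0 := by
    intro h0
    have hXdvd : X ∣ p := by
      rw [X_dvd_iff, coeff_zero_eq_eval_zero]; exact h0
    obtain ⟨r, hr⟩ := hXdvd
    have haev : f * aeval f r = 0 := by
      have := minpoly.aeval ℂ f
      rwa [← hpdef, hr, map_mul, aeval_X] at this
    have hfu : IsUnit f := g.isUnit.pow m
    obtain ⟨u, hu⟩ := hfu
    have hr0 : aeval f r = 0 := by
      rw [← hu] at haev ⊢
      exact (Units.mul_right_eq_zero u).mp haev
    have hdvd : p ∣ r := minpoly.dvd ℂ f hr0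
    have hrne : r ≠ 0 := by rintro rfl; simp at hr; exact hpne hr
    have hlt : r.degree < p.degree := by
      rw [hr, mul_comm]
      exact degree_lt_degree_mul_X hrne
    exact hrne (Polynomial.eq_zero_of_dvd_of_degree_lt hdvd hlt)
  have hsep : p.Separable := PerfectField.separable_iff_squarefree.mpr hsq
  set q : ℂ[X] := p.comp (X ^ m) with hq
  have haevq : aeval (g : V →ₗ[ℂ] V) q = 0 := by
    rw [hq, aeval_comp, map_pow, aeval_X, ← hf]
    exact minpoly.aeval ℂ f
  have hq0 : q.eval 0 ≠ 0 := by
    rw [hq, eval_comp, eval_pow, eval_X, zero_pow hm]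
    exact hp0
  have c1 : IsCoprime q ((derivative p).comp (X ^ m)) := by
    obtain ⟨a, b, hab⟩ := hsep
    refine ⟨a.comp (X ^ m), b.comp (X ^ m), ?_⟩
    have := congrArg (fun r : ℂ[X] => r.comp (X ^ m)) hab
    simpa [add_comp, mul_comp, one_comp] using this
  have c2 : IsCoprime q X := by
    refine ((Polynomial.irreducible_X.coprime_iff_not_dvd).mpr ?_).symm
    rw [X_dvd_iff, coeff_zero_eq_eval_zero]
    exact hq0
  have c0 : IsCoprime q (C ((m : ℂ))) := by
    refine ⟨0, C ((m : ℂ))⁻¹, ?_⟩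
    rw [zero_mul, zero_add, ← C_mul, inv_mul_cancel₀ (Nat.cast_ne_zero.mpr hm), C_1]
  have csep : q.Separable := by
    have hd : derivative q = (C ((m : ℂ)) * X ^ (m - 1)) * (derivative p).comp (X ^ m) := by
      rw [hq, derivative_comp, derivative_X_pow]
    rw [Polynomial.separable_def, hd]
    exact ((c0.mul_right (c2.pow_right)).mul_right c1)
  exact Module.End.isSemisimple_of_squarefree_aeval_eq_zero csep.squarefree haevq

/-- A commuting family of semisimple (hence diagonalizable) invertible endomorphisms is
simultaneously diagonalizable. -/
lemma simultaneous_basis_of_isSemisimple {V : Type*} [AddCommGroup V] [Module ℂ V]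
    [FiniteDimensional ℂ V]
    (E : Subgroup (V →ₗ[ℂ] V)ˣ)
    (hcomm : ∀ a ∈ E, ∀ b ∈ E, a * b = b * a)
    (hss : ∀ g ∈ E, Module.End.IsSemisimple (g : V →ₗ[ℂ] V)) :
    ∃ (n : ℕ) (b : Basis (Fin n) ℂ V),
      ∀ g ∈ E, ∀ i, ∃ c : ℂ, (g : V →ₗ[ℂ] V) (b i) = c • b i := by
  classical
  set F : ↥E → Module.End ℂ V := fun g => ((g : (V →ₗ[ℂ] V)ˣ) : V →ₗ[ℂ] V) with hF
  have hcom : ∀ i j : ↥E, Commute (F i) (F j) := by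
    intro i j
    have := hcomm i i.2 j j.2
    exact congrArg Units.val this
  have htop : ∀ i, ⨆ μ, (F i).maxGenEigenspace μ = ⊤ := fun i =>
    Module.End.iSup_maxGenEigenspace_eq_top (F i)
  have hsup : ⨆ χ : ↥E → ℂ, ⨅ i, (F i).maxGenEigenspace (χ i) = ⊤ :=
    Module.End.iSup_iInf_maxGenEigenspace_eq_top_of_iSup_maxGenEigenspace_eq_top_of_commute
      F (fun i j _ => hcom i j) htop
  have hind : iSupIndep fun χ : ↥E → ℂ => ⨅ i, (F i).maxGenEigenspace (χ i) :=
    Module.End.independent_iInf_maxGenEigenspace_of_forall_mapsTo F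
      (fun i j φ => Module.End.mapsTo_maxGenEigenspace_of_comm (hcom j i) φ)
  have hInt : DirectSum.IsInternal fun χ : ↥E → ℂ => ⨅ i, (F i).maxGenEigenspace (χ i) :=
    DirectSum.isInternal_submodule_of_iSupIndep_of_iSup_eq_top hind hsup
  set bW : ∀ χ : ↥E → ℂ,
      Basis (Fin (Module.finrank ℂ ↥(⨅ i, (F i).maxGenEigenspace (χ i)))) ℂ
        ↥(⨅ i, (F i).maxGenEigenspace (χ i)) := fun χ => Module.finBasis ℂ _ with hbW
  set B := hInt.collectedBasis bW with hB
  letI : Fintype (Σ χ : ↥E → ℂ, Fin (Module.finrank ℂ ↥(⨅ i, (F i).maxGenEigenspace (χ i)))) :=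
    FiniteDimensional.fintypeBasisIndex B
  refine ⟨Fintype.card _, B.reindex (Fintype.equivFin _), ?_⟩
  intro g hg i
  set σ := (Fintype.equivFin _).symm i with hσ
  have hmem : (B σ : V) ∈ ⨅ i, (F i).maxGenEigenspace (σ.1 i) :=
    hInt.collectedBasis_mem bW σ
  have hmem' : (B σ : V) ∈ (F ⟨g, hg⟩).maxGenEigenspace (σ.1 ⟨g, hg⟩) := by
    exact (Submodule.mem_iInf _).mp hmem ⟨g, hg⟩
  have heig : (B σ : V) ∈ (F ⟨g, hg⟩).eigenspace (σ.1 ⟨g, hg⟩) := by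
    rwa [← (hss g hg).isFinitelySemisimple.maxGenEigenspace_eq_eigenspace]
  refine ⟨σ.1 ⟨g, hg⟩, ?_⟩
  rw [Basis.reindex_apply]
  exact Module.End.mem_eigenspace_iff.mp heig

/-- Let `V` be a finite-dimensional complex vector space, `E` an abelian
subgroup of `GL(V)`, and `K ≤ E` a subgroup of finite index in `E` all of whose
elements are diagonalizable.  Then every element of `E` is diagonalizable, and `E` is
simultaneously diagonalizable: there is a basis of `V` in which every element of `E`
is diagonal. -/
theorem stmt14 {V : Type*} [AddCommGroup V] [Module ℂ V] [FiniteDimensional ℂ V]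
    (E K : Subgroup (V →ₗ[ℂ] V)ˣ) (hKE : K ≤ E)
    (hcomm : ∀ a ∈ E, ∀ b ∈ E, a * b = b * a)
    (hindex : (K.subgroupOf E).FiniteIndex)
    (hdiag : ∀ k ∈ K, IsDiagonalizable (k : V →ₗ[ℂ] V)) :
    (∀ g ∈ E, IsDiagonalizable (g : V →ₗ[ℂ] V)) ∧
    ∃ (n : ℕ) (b : Module.Basis (Fin n) ℂ V),
      ∀ g ∈ E, ∀ i, ∃ c : ℂ, (g : V →ₗ[ℂ] V) (b i) = c • b i := by
  classical
  have hab : ∀ a b : ↥E, a * b = b * a := fun a b =>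
    Subtype.ext (hcomm a a.2 b b.2)
  haveI : (K.subgroupOf E).Normal := by
    refine ⟨fun n hn g => ?_⟩
    have : g * n * g⁻¹ = n := by
      rw [hab g n, mul_assoc, mul_inv_cancel, mul_one]
    rwa [this]
  set m := (K.subgroupOf E).index with hmdef
  have hm : m ≠ 0 := hindex.index_ne_zero
  have hss : ∀ g ∈ E, Module.End.IsSemisimple (g : V →ₗ[ℂ] V) := by
    intro g hg
    have h1 : (⟨g, hg⟩ : ↥E) ^ m ∈ K.subgroupOf E :=
      Subgroup.pow_index_mem (K.subgroupOf E) _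
    have h2 : g ^ m ∈ K := by
      simpa [Subgroup.mem_subgroupOf] using h1
    have h3 : Module.End.IsSemisimple ((g : V →ₗ[ℂ] V) ^ m) := by
      have := isSemisimple_of_isDiagonalizable _ (hdiag _ h2)
      rwa [Units.val_pow_eq_pow_val] at this
    exact isSemisimple_of_pow_isSemisimple g m hm h3
  obtain ⟨n, b, hb⟩ := simultaneous_basis_of_isSemisimple E hcomm hss
  exact ⟨fun g hg => ⟨n, b, hb g hg⟩, ⟨n, b, hb⟩⟩
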